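/- arXiv:0805.4631 — 5 statements merged into one kernel-verified Lean document; each statement's English description precedes it below -/
import Mathlib

section
/- Let r ≥ 1, l_1,…,l_r and d_1,…,d_r positive integers, m_1,…,m_r integers, and p_1,…,p_r integers. Suppose J ⊆ {1,…,r} is a nonempty subset of maximum cardinality among those satisfying p_k + m_k + l_k - l_J·d_k < 0 for all k ∈ J (where l_J = ∑_{j∈J} l_j). Then for every k ∉ J one has p_k + m_k - l_J·d_k ≥ 0. -/
open Finset

/-- Key step in the proof of Theorem 1.2: if `J` has maximum cardinality among
nonempty subsets where all the quantities `p k + m k + l k - l_J * d k` are negative,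
then for every `k ∉ J` we have `p k + m k - l_J * d k ≥ 0`. -/
theorem stmt_1 (r : ℕ) (hr : 1 ≤ r) (l d m p : Fin r → ℤ)
    (hl : ∀ k, 1 ≤ l k) (hd : ∀ k, 1 ≤ d k)
    (J : Finset (Fin r)) (hJ : J.Nonempty)
    (hneg : ∀ k ∈ J, p k + m k + l k - (∑ j ∈ J, l j) * d k < 0)
    (hmax : ∀ J' : Finset (Fin r), J'.Nonempty →
      (∀ k ∈ J', p k + m k + l k - (∑ j ∈ J', l j) * d k < 0) → J'.card ≤ J.card) :
    ∀ k, k ∉ J → 0 ≤ p k + m k - (∑ j ∈ J, l j) * d k := by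
  intro k hk
  by_contra h
  push_neg at h
  have hsum : ∑ j ∈ insert k J, l j = l k + ∑ j ∈ J, l j := Finset.sum_insert hk
  have hneg' : ∀ j ∈ insert k J,
      p j + m j + l j - (∑ i ∈ insert k J, l i) * d j < 0 := by
    intro j hj
    rw [hsum]
    rcases Finset.mem_insert.mp hj with rfl | hj
    · nlinarith [hl j, hd j]
    · have h1 := hneg j hj
      nlinarith [hl k, hd j, hl j]
  have := hmax (insert k J) ⟨k, Finset.mem_insert_self k J⟩ hneg'
  rw [Finset.card_insert_of_notMem hk] at this
  omega
end

section
/- Fix r ≥ 1, positive integers l_1,…,l_r, d_1,…,d_r and integers m_1,…,m_r. Define Reg ⊆ ℤ^r as the set of tuples (p_1,…,p_r) such that for every nonempty J ⊆ {1,…,r} there exists k ∈ J with p_k + m_k + l_k - l_J·d_k ≥ 0, where l_J = ∑_{j∈J} l_j. For each permutation σ of {1,…,r} and each k, let J(σ,k) = {σ(i) : i ≥ σ^{-1}(k)} and define p_σ ∈ ℤ^r by (p_σ)_k = -m_k - l_k + l_{J(σ,k)}·d_k. Then Reg = ⋃_{σ ∈ S_r} (p_σ + ℕ^r), where p_σ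 + ℕ^r = {p ∈ ℤ^r : p_k ≥ (p_σ)_k for all k}. -/
open Finset

/-- The index set `J(σ,k) = {σ(i) : i ≥ σ⁻¹(k)}`. -/
def Jset {r : ℕ} (σ : Equiv.Perm (Fin r)) (k : Fin r) : Finset (Fin r) :=
  (Finset.univ.filter (fun i => σ.symm k ≤ i)).image σ

/-- The translate basepoint `p_σ`, with `(p_σ)_k = -m_k - l_k + l_{J(σ,k)} d_k`. -/
def pSigma {r : ℕ} (l d m : Fin r → ℤ) (σ : Equiv.Perm (Fin r)) (k : Fin r) : ℤ :=
  -m k - l k + (∑ j ∈ Jset σ k, l j) * d k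

lemma exists_list (r : ℕ) (l d m p : Fin r → ℤ)
    (hp : ∀ J : Finset (Fin r), J.Nonempty →
      ∃ k ∈ J, 0 ≤ p k + m k + l k - (∑ j ∈ J, l j) * d k) :
    ∀ (n : ℕ) (J : Finset (Fin r)), J.card = n →
      ∃ L : List (Fin r), L.Nodup ∧ L.toFinset = J ∧
        ∀ i (h : i < L.length),
          0 ≤ p (L.get ⟨i, h⟩) + m (L.get ⟨i, h⟩) + l (L.get ⟨i, h⟩)
            - (∑ j ∈ (L.drop i).toFinset, l j) * d (L.get ⟨i, h⟩) := by
  intro n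
  induction n with
  | zero =>
    intro J hJ
    refine ⟨[], by simp, ?_, by simp⟩
    simp [Finset.card_eq_zero.mp hJ]
  | succ n ih =>
    intro J hJ
    have hne : J.Nonempty := Finset.card_pos.mp (by omega)
    obtain ⟨k, hk, hcond⟩ := hp J hne
    obtain ⟨L, hnd, htf, hc⟩ := ih (J.erase k)
      (by rw [Finset.card_erase_of_mem hk, hJ]; omega)
    refine ⟨k :: L, ?_, ?_, ?_⟩
    · refine List.nodup_cons.mpr ⟨?_, hnd⟩
      intro hmem
      have : k ∈ J.erase k := htf ▸ List.mem_toFinset.mpr hmem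
      exact (Finset.notMem_erase k J) this
    · rw [List.toFinset_cons, htf, Finset.insert_erase hk]
    · intro i h
      match i with
      | 0 =>
        simpa [List.toFinset_cons, htf, Finset.insert_erase hk] using hcond
      | i + 1 =>
        exact hc i (by simpa using h)

/-- Proposition 1.3: the regularity set is the union of the `r!` translates
`p_σ + ℕ^r` over permutations `σ`. -/
theorem stmt_2 (r : ℕ) (hr : 1 ≤ r) (l d m : Fin r → ℤ)
    (hl : ∀ k, 1 ≤ l k) (hd : ∀ k, 1 ≤ d k) :
    {p : Fin r → ℤ | ∀ J : Finset (Fin r), J.Nonempty →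
        ∃ k ∈ J, 0 ≤ p k + m k + l k - (∑ j ∈ J, l j) * d k} =
      ⋃ σ : Equiv.Perm (Fin r),
        {p : Fin r → ℤ | ∀ k, pSigma l d m σ k ≤ p k} := by
  ext p
  simp only [Set.mem_setOf_eq, Set.mem_iUnion]
  constructor
  · intro hp
    obtain ⟨L, hnd, htf, hc⟩ := exists_list r l d m p hp (Finset.univ.card) Finset.univ rfl
    have hlen : L.length = r := by
      have := List.toFinset_card_of_nodup hnd
      rw [htf] at this
      simpa using this.symm
    set f : Fin r → Fin r := fun i => L.get (Fin.cast hlen.symm i) with hf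
    have hinj : Function.Injective f := by
      intro a b hab
      have := (List.nodup_iff_injective_get).mp hnd hab
      simpa [Fin.ext_iff] using Fin.mk.inj_iff.mp (by exact_mod_cast this)
    have hbij : Function.Bijective f :=
      (Fintype.bijective_iff_injective_and_card f).mpr ⟨hinj, rfl⟩
    refine ⟨Equiv.ofBijective f hbij, fun k => ?_⟩
    set σ := Equiv.ofBijective f hbij with hσ
    set i : Fin r := σ.symm k with hi
    have hσi : f i = k := σ.apply_symm_apply k
    have hJ : Jset σ k = (L.drop i).toFinset := by
      ext x
      simp only [Jset, Finset.mem_image, Finset.mem_filter, Finset.mem_univ, true_and,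
        List.mem_toFinset]
      constructor
      · rintro ⟨i', hii', rfl⟩
        have hii : (i : ℕ) ≤ (i' : ℕ) := hii'
        have hlt : (i' : ℕ) - i < (L.drop (i : ℕ)).length := by
          rw [List.length_drop, hlen]; omega
        have h2 : σ i' = (L.drop (i : ℕ))[(i' : ℕ) - (i : ℕ)] := by
          show f i' = _
          rw [List.getElem_drop]
          simp only [hf, List.get_eq_getElem, Fin.coe_cast]
          congr 1
          omega
        rw [h2]
        exact List.getElem_mem _
      · intro hx
        obtain ⟨j, hjlt, hj⟩ := List.mem_iff_getElem.mp hx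
        have hjl : (i : ℕ) + j < L.length := by
          rw [List.length_drop] at hjlt; omega
        refine ⟨⟨(i : ℕ) + j, by omega⟩, by simp [hi, Fin.le_def], ?_⟩
        show f _ = x
        rw [← hj, List.getElem_drop]
        simp [hf, List.get_eq_getElem, Fin.coe_cast]
    have hcnd := hc (i : ℕ) (by rw [hlen]; exact i.isLt)
    have hkey : L.get ⟨(i : ℕ), by rw [hlen]; exact i.isLt⟩ = k := by
      rw [← hσi]; rfl
    rw [hkey] at hcnd
    rw [pSigma, hJ]
    linarith
  · rintro ⟨σ, hσ⟩ J hJ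
    obtain ⟨k, hk, hmin⟩ := Finset.exists_min_image J (fun j => σ.symm j) hJ
    refine ⟨k, hk, ?_⟩
    have hsub : J ⊆ Jset σ k := by
      intro j hj
      simp only [Jset, Finset.mem_image, Finset.mem_filter, Finset.mem_univ, true_and]
      exact ⟨σ.symm j, hmin j hj, σ.apply_symm_apply j⟩
    have hsum : (∑ j ∈ J, l j) ≤ ∑ j ∈ Jset σ k, l j :=
      Finset.sum_le_sum_of_subset_of_nonneg hsub (fun j _ _ => by linarith [hl j])
    have hmul : (∑ j ∈ J, l j) * d k ≤ (∑ j ∈ Jset σ k, l j) * d k :=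
      mul_le_mul_of_nonneg_right hsum (by linarith [hd k])
    have := hσ k
    rw [pSigma] at this
    linarith
end

section
/- Fix r ≥ 1, positive integers l_1,…,l_r, d_1,…,d_r and integers m_1,…,m_r. Let σ be a permutation of {1,…,r}, set J(σ,k) = {σ(i) : i ≥ σ^{-1}(k)}, and suppose p ∈ ℤ^r satisfies p_k ≥ -m_k - l_k + l_{J(σ,k)}·d_k for all k, where l_J = ∑_{j∈J} l_j. Then for every nonempty subset J ⊆ {1,…,r} there exists k ∈ J with p_k + m_k + l_k - l_J·d_k ≥ 0. -/
open Finset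

/-- The converse inclusion in Proposition 1.3: each translate `p_σ + ℕ^r` is
contained in the regularity set. -/
theorem stmt_3 (r : ℕ) (hr : 1 ≤ r) (l d m : Fin r → ℤ)
    (hl : ∀ k, 1 ≤ l k) (hd : ∀ k, 1 ≤ d k)
    (σ : Equiv.Perm (Fin r)) (p : Fin r → ℤ)
    (hp : ∀ k, -m k - l k + (∑ j ∈ Jset σ k, l j) * d k ≤ p k) :
    ∀ J : Finset (Fin r), J.Nonempty →
      ∃ k ∈ J, 0 ≤ p k + m k + l k - (∑ j ∈ J, l j) * d k := by
  intro J hJ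
  have hJ' : (J.image σ.symm).Nonempty := hJ.image _
  obtain ⟨i, hi, hmin⟩ := (J.image σ.symm).exists_min_image id hJ'
  obtain ⟨k, hkJ, hk⟩ := Finset.mem_image.mp hi
  refine ⟨k, hkJ, ?_⟩
  have hsub : J ⊆ Jset σ k := by
    intro j hj
    simp only [Jset, Finset.mem_image, Finset.mem_filter, Finset.mem_univ, true_and]
    refine ⟨σ.symm j, ?_, by simp⟩
    rw [hk]
    exact hmin _ (Finset.mem_image_of_mem _ hj)
  have hsum : (∑ j ∈ J, l j) ≤ ∑ j ∈ Jset σ k, l j :=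
    Finset.sum_le_sum_of_subset_of_nonneg hsub (fun j _ _ => le_trans zero_le_one (hl j))
  have hmul : (∑ j ∈ J, l j) * d k ≤ (∑ j ∈ Jset σ k, l j) * d k :=
    mul_le_mul_of_nonneg_right hsum (le_trans zero_le_one (hd k))
  have := hp k
  linarith
end

section
/- Fix r ≥ 1 and positive integers l_1,…,l_r, d_1,…,d_r. For m ∈ ℤ^r define R(m) = max over nonempty J ⊆ {1,…,r} of min_{k∈J} ( l_J - ⌊(m_k + l_k)/d_k⌋ ), where l_J = ∑_{j∈J} l_j and ⌊·⌋ denotes the floor of a rational number. Then for all m, m' ∈ ℤ^r: R(m) + R(m') ≥ R(m + m'). -/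
open Finset

/-- `min_{k ∈ J} f k` (junk value `0` if `J = ∅`; only used for nonempty `J`). -/
def minOver {r : ℕ} (J : Finset (Fin r)) (f : Fin r → ℤ) : ℤ :=
  if h : J.Nonempty then J.inf' h f else 0

/-- The finset of nonempty subsets of `{1,…,r}`. -/
def neSubsets (r : ℕ) : Finset (Finset (Fin r)) :=
  Finset.univ.powerset.filter Finset.Nonempty

theorem neSubsets_nonempty {r : ℕ} (hr : 1 ≤ r) : (neSubsets r).Nonempty :=
  ⟨Finset.univ, by
    simp only [neSubsets, Finset.mem_filter, Finset.mem_powerset]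
    exact ⟨Finset.Subset.refl _, ⟨⟨0, hr⟩, Finset.mem_univ _⟩⟩⟩

/-- `max` over nonempty subsets `J ⊆ {1,…,r}` of `min_{k ∈ J} f J k`. -/
def maxMin {r : ℕ} (hr : 1 ≤ r) (f : Finset (Fin r) → Fin r → ℤ) : ℤ :=
  (neSubsets r).sup' (neSubsets_nonempty hr) (fun J => minOver J (f J))

lemma mem_neSubsets {r : ℕ} {J : Finset (Fin r)} (h : J.Nonempty) :
    J ∈ neSubsets r := by
  simp only [neSubsets, Finset.mem_filter, Finset.mem_powerset]
  exact ⟨Finset.subset_univ _, h⟩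

/-- Key floor inequality: `⌊(m+l)/d⌋ + ⌊(m'+l)/d⌋ ≤ ⌊(m+m'+l)/d⌋ + l`. -/
lemma floor_key (mm mm' ll dd : ℤ) (hl : 1 ≤ ll) (hd : 1 ≤ dd) :
    ⌊((mm + ll : ℤ) : ℚ) / ((dd : ℤ) : ℚ)⌋ + ⌊((mm' + ll : ℤ) : ℚ) / ((dd : ℤ) : ℚ)⌋
      ≤ ⌊((mm + mm' + ll : ℤ) : ℚ) / ((dd : ℤ) : ℚ)⌋ + ll := by
  have hd0 : (0 : ℚ) < (dd : ℚ) := by exact_mod_cast lt_of_lt_of_le one_pos hd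
  have hd1 : (1 : ℚ) ≤ (dd : ℚ) := by exact_mod_cast hd
  have hl0 : (0 : ℚ) ≤ (ll : ℚ) := by exact_mod_cast le_trans zero_le_one hl
  rw [← sub_le_iff_le_add, Int.le_floor]
  have ha : (⌊((mm + ll : ℤ) : ℚ) / ((dd : ℤ) : ℚ)⌋ : ℚ)
      ≤ ((mm + ll : ℤ) : ℚ) / ((dd : ℤ) : ℚ) := Int.floor_le _
  have hb : (⌊((mm' + ll : ℤ) : ℚ) / ((dd : ℤ) : ℚ)⌋ : ℚ)
      ≤ ((mm' + ll : ℤ) : ℚ) / ((dd : ℤ) : ℚ) := Int.floor_le _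
  have hdiv : (ll : ℚ) / (dd : ℚ) ≤ (ll : ℚ) := div_le_self hl0 hd1
  have heq : ((mm + ll : ℤ) : ℚ) / ((dd : ℤ) : ℚ) + ((mm' + ll : ℤ) : ℚ) / ((dd : ℤ) : ℚ)
      = ((mm + mm' + ll : ℤ) : ℚ) / ((dd : ℤ) : ℚ) + (ll : ℚ) / (dd : ℚ) := by
    field_simp
    push_cast
    ring
  push_cast
  push_cast at ha hb heq
  linarith

/-- Theorem 2.2 (combinatorial form): subadditivity of the regularity
`R(m) = max_{J ≠ ∅} min_{k∈J}(l_J - ⌊(m_k + l_k)/d_k⌋)`. -/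
theorem stmt_9 (r : ℕ) (hr : 1 ≤ r) (l d : Fin r → ℤ)
    (hl : ∀ k, 1 ≤ l k) (hd : ∀ k, 1 ≤ d k) (m m' : Fin r → ℤ) :
    maxMin hr (fun J k =>
        (∑ j ∈ J, l j) - ⌊((m k + m' k + l k : ℤ) : ℚ) / ((d k : ℤ) : ℚ)⌋) ≤
      maxMin hr (fun J k =>
          (∑ j ∈ J, l j) - ⌊((m k + l k : ℤ) : ℚ) / ((d k : ℤ) : ℚ)⌋) +
        maxMin hr (fun J k =>
          (∑ j ∈ J, l j) - ⌊((m' k + l k : ℤ) : ℚ) / ((d k : ℤ) : ℚ)⌋) := by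
  classical
  set a : Fin r → ℤ := fun k => ⌊((m k + l k : ℤ) : ℚ) / ((d k : ℤ) : ℚ)⌋ with ha_def
  set b : Fin r → ℤ := fun k => ⌊((m' k + l k : ℤ) : ℚ) / ((d k : ℤ) : ℚ)⌋ with hb_def
  set c : Fin r → ℤ := fun k => ⌊((m k + m' k + l k : ℤ) : ℚ) / ((d k : ℤ) : ℚ)⌋ with hc_def
  have key : ∀ k, a k + b k ≤ c k + l k := fun k =>
    floor_key (m k) (m' k) (l k) (d k) (hl k) (hd k)
  show maxMin hr (fun J k => (∑ j ∈ J, l j) - c k) ≤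
      maxMin hr (fun J k => (∑ j ∈ J, l j) - a k) +
      maxMin hr (fun J k => (∑ j ∈ J, l j) - b k)
  apply Finset.sup'_le
  intro J hJ
  have hJne : J.Nonempty := by
    simpa [neSubsets] using hJ
  obtain ⟨k, hkJ, hk⟩ := Finset.exists_max_image J (fun j => a j + b j) hJne
  set J1 : Finset (Fin r) := J.filter (fun j => a j ≤ a k) with hJ1_def
  set J2 : Finset (Fin r) := insert k (J.filter (fun j => ¬ a j ≤ a k)) with hJ2_def
  have hkJ1 : k ∈ J1 := Finset.mem_filter.2 ⟨hkJ, le_refl _⟩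
  have hJ1ne : J1.Nonempty := ⟨k, hkJ1⟩
  have hJ2ne : J2.Nonempty := ⟨k, Finset.mem_insert_self _ _⟩
  have hknot : k ∉ J.filter (fun j => ¬ a j ≤ a k) := by
    simp [Finset.mem_filter]
  -- sum identity
  have hsum : (∑ j ∈ J1, l j) + (∑ j ∈ J2, l j) = (∑ j ∈ J, l j) + l k := by
    rw [hJ2_def, Finset.sum_insert hknot, hJ1_def]
    rw [← Finset.sum_filter_add_sum_filter_not J (fun j => a j ≤ a k) l]
    ring
  -- bounds on a, b over J1, J2
  have hA : ∀ j ∈ J1, a j ≤ a k := fun j hj => (Finset.mem_filter.1 hj).2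
  have hB : ∀ j ∈ J2, b j ≤ b k := by
    intro j hj
    rcases Finset.mem_insert.1 hj with h | h
    · rw [h]
    · have h1 := (Finset.mem_filter.1 h).2
      have h2 := hk j (Finset.mem_filter.1 h).1
      have h3 : a k < a j := lt_of_not_ge h1
      linarith
  -- R(m) ≥ l_{J1} - a k
  have hR1 : (∑ j ∈ J1, l j) - a k ≤ maxMin hr (fun J k => (∑ j ∈ J, l j) - a k) := by
    refine le_trans ?_ (Finset.le_sup' (fun J' => minOver J' (fun k => (∑ j ∈ J', l j) - a k))
      (mem_neSubsets hJ1ne))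
    rw [minOver, dif_pos hJ1ne]
    exact Finset.le_inf' hJ1ne _ (fun j hj => by have := hA j hj; linarith)
  have hR2 : (∑ j ∈ J2, l j) - b k ≤ maxMin hr (fun J k => (∑ j ∈ J, l j) - b k) := by
    refine le_trans ?_ (Finset.le_sup' (fun J' => minOver J' (fun k => (∑ j ∈ J', l j) - b k))
      (mem_neSubsets hJ2ne))
    rw [minOver, dif_pos hJ2ne]
    exact Finset.le_inf' hJ2ne _ (fun j hj => by have := hB j hj; linarith)
  -- LHS bound
  have hL : minOver J (fun k => (∑ j ∈ J, l j) - c k) ≤ (∑ j ∈ J, l j) - c k := by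
    rw [minOver, dif_pos hJne]
    exact Finset.inf'_le _ hkJ
  have := key k
  linarith
end

section
/- Fix r ≥ 1 and positive integers l_1,…,l_r, d_1,…,d_r, and integers m, m' ∈ ℤ^r. Define Reg(m) = {p ∈ ℤ^r : for every nonempty J ⊆ {1,…,r} there exists k ∈ J with p_k + m_k + l_k - l_J·d_k ≥ 0}. Then Reg(m) + Reg(m') ⊆ Reg(m + m'), i.e., if p ∈ Reg(m) and p' ∈ Reg(m') then p + p' ∈ Reg(m + m'). -/
open Finset

/-- Theorem 2.1 restated via regularity sets: `Reg(m) + Reg(m') ⊆ Reg(m + m')`. -/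
theorem stmt_19 (r : ℕ) (hr : 1 ≤ r) (l d : Fin r → ℤ)
    (hl : ∀ k, 1 ≤ l k) (hd : ∀ k, 1 ≤ d k) (m m' : Fin r → ℤ)
    (p p' : Fin r → ℤ)
    (hp : p ∈ {q : Fin r → ℤ | ∀ J : Finset (Fin r), J.Nonempty →
      ∃ k ∈ J, 0 ≤ q k + m k + l k - (∑ j ∈ J, l j) * d k})
    (hp' : p' ∈ {q : Fin r → ℤ | ∀ J : Finset (Fin r), J.Nonempty →
      ∃ k ∈ J, 0 ≤ q k + m' k + l k - (∑ j ∈ J, l j) * d k}) :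
    p + p' ∈ {q : Fin r → ℤ | ∀ J : Finset (Fin r), J.Nonempty →
      ∃ k ∈ J, 0 ≤ q k + (m k + m' k) + l k - (∑ j ∈ J, l j) * d k} := by
  intro J hJ
  obtain ⟨k, hk, h1⟩ := hp J hJ
  obtain ⟨k', hk', h2⟩ := hp' {k} ⟨k, mem_singleton_self k⟩
  rw [mem_singleton] at hk'
  subst hk'
  rw [sum_singleton] at h2
  refine ⟨k', hk, ?_⟩
  have h3 : 0 ≤ l k' * (d k' - 1) :=
    mul_nonneg (by linarith [hl k']) (by linarith [hd k'])
  simp only [Pi.add_apply]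
  nlinarith
end
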